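/- (Lemma 1, T = 3.) Let π^S be a positive probability vector on cells (i,j,k) ∈ (Fin r)³ that is permutation-invariant (π^S(i,j,k) = π^S of any permutation of (i,j,k)), and let μ₁, μ₂, μ₃ ∈ ℝ. Consider the feasible set of positive probability vectors π satisfying (c1): ∑_{(s,t,u) ∈ A((i,j,k))} π(s,t,u) = ∑_{(s,t,u) ∈ A((i,j,k))} π^S(s,t,u) for all cells (i,j,k), and (c2): ∑_i u(i) π(i,+,+) = μ₁, ∑_j u(j) π(+,j,+) = μ₂, ∑_k u(k) π(+,+,k) = μ₃ (where + denotes summation over that coordinate). Suppose π* is a member of the feasible set for which there exist β₁, β₂, β₃ ∈ ℝ and a permutation-invariant function ψ on cells such that F(π*(i,j,k)/π^S(i,j,k)) = β₁u(i) + β₂u(j) + β₃u(k) + ψ(i,j,k) for all cells. Then I(π* : π^S) ≤ I(π : π^S) for every π in the feasible set; i.e., the minimum of I(π : π^S) over the feasible set is attained at π*. -/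

import Mathlib

set_option maxHeartbeats 1000000

/-- The orbit `A((i,j,k))` of a cell of an `r³` table: all coordinate permutations. -/
def A3 {r : ℕ} (c : Fin r × Fin r × Fin r) : Finset (Fin r × Fin r × Fin r) :=
  {(c.1, c.2.1, c.2.2), (c.1, c.2.2, c.2.1), (c.2.1, c.1, c.2.2),
   (c.2.1, c.2.2, c.1), (c.2.2, c.1, c.2.1), (c.2.2, c.2.1, c.1)}

lemma A3_self {r : ℕ} (c : Fin r × Fin r × Fin r) : c ∈ A3 c := by
  obtain ⟨a, b, d⟩ := c; simp [A3]

lemma A3_symm {r : ℕ} {p c : Fin r × Fin r × Fin r} (h : p ∈ A3 c) : c ∈ A3 p := by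
  obtain ⟨a, b, d⟩ := c; obtain ⟨x, y, z⟩ := p
  simp only [A3, Finset.mem_insert, Finset.mem_singleton, Prod.mk.injEq] at h ⊢
  rcases h with ⟨h1,h2,h3⟩|⟨h1,h2,h3⟩|⟨h1,h2,h3⟩|⟨h1,h2,h3⟩|⟨h1,h2,h3⟩|⟨h1,h2,h3⟩ <;>
    subst h1 <;> subst h2 <;> subst h3 <;> tauto

lemma A3_eq_of_mem {r : ℕ} {p c : Fin r × Fin r × Fin r} (h : p ∈ A3 c) : A3 p = A3 c := by
  obtain ⟨a, b, d⟩ := c; obtain ⟨x, y, z⟩ := p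
  simp only [A3, Finset.mem_insert, Finset.mem_singleton, Prod.mk.injEq] at h
  rcases h with ⟨h1,h2,h3⟩|⟨h1,h2,h3⟩|⟨h1,h2,h3⟩|⟨h1,h2,h3⟩|⟨h1,h2,h3⟩|⟨h1,h2,h3⟩ <;>
    subst h1 <;> subst h2 <;> subst h3 <;>
    (apply Finset.ext; intro q;
     simp only [A3, Finset.mem_insert, Finset.mem_singleton]; try tauto)

lemma sum_orbit {r : ℕ} (h : Fin r × Fin r × Fin r → ℝ) :
    ∑ c, (((A3 c).card : ℝ))⁻¹ * ∑ p ∈ A3 c, h p = ∑ c, h c := by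
  have step : ∀ c : Fin r × Fin r × Fin r,
      (((A3 c).card : ℝ))⁻¹ * ∑ p ∈ A3 c, h p = ∑ p ∈ A3 c, ((A3 c).card : ℝ)⁻¹ * h p := by
    intro c; rw [Finset.mul_sum]
  simp_rw [step]
  rw [Finset.sum_comm' (s' := fun p => A3 p) (t' := Finset.univ)
    (fun c p => by simp [iff_comm]; constructor
                   · exact fun hp => A3_symm hp
                   · exact fun hp => A3_symm hp)]
  refine Finset.sum_congr rfl fun p _ => ?_
  have hcard : ∀ c ∈ A3 p, ((A3 c).card : ℝ)⁻¹ * h p = ((A3 p).card : ℝ)⁻¹ * h p := by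
    intro c hc; rw [A3_eq_of_mem hc]
  rw [Finset.sum_congr rfl hcard, Finset.sum_const, nsmul_eq_mul]
  have hpos : (0:ℝ) < (A3 p).card := by
    have : p ∈ A3 p := A3_self p
    exact_mod_cast Finset.card_pos.mpr ⟨p, this⟩
  field_simp

lemma sum_psi_zero {r : ℕ} (ψ g : Fin r × Fin r × Fin r → ℝ)
    (hψ : ∀ c, ∀ p ∈ A3 c, ψ p = ψ c) (hg : ∀ c, ∑ p ∈ A3 c, g p = 0) :
    ∑ c, ψ c * g c = 0 := by
  rw [← sum_orbit (fun c => ψ c * g c)]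
  refine Finset.sum_eq_zero fun c _ => ?_
  have : ∑ p ∈ A3 c, ψ p * g p = ψ c * ∑ p ∈ A3 c, g p := by
    rw [Finset.mul_sum]; exact Finset.sum_congr rfl fun p hp => by rw [hψ c p hp]
  rw [this, hg c, mul_zero, mul_zero]

/-- gradient inequality for a convex differentiable function on `Ioi 0`. -/
lemma grad_ineq {f : ℝ → ℝ} (hconv : StrictConvexOn ℝ (Set.Ioi 0) f)
    (hdiff : ∀ x ∈ Set.Ioi (0 : ℝ), DifferentiableAt ℝ f x)
    {x y : ℝ} (hx : 0 < x) (hy : 0 < y) :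
    f x + deriv f x * (y - x) ≤ f y := by
  rcases lt_trichotomy x y with h | h | h
  · have hs := hconv.convexOn.deriv_le_slope (Set.mem_Ioi.2 hx) (Set.mem_Ioi.2 hy) h
      (hdiff x hx)
    rw [slope_def_field] at hs
    have hyx : 0 < y - x := sub_pos.2 h
    rw [le_div_iff₀ hyx] at hs
    linarith
  · subst h; simp
  · have hs := hconv.convexOn.slope_le_deriv (Set.mem_Ioi.2 hy) (Set.mem_Ioi.2 hx) h
      (hdiff x hx)
    rw [slope_def_field] at hs
    have hxy : 0 < x - y := sub_pos.2 h
    rw [div_le_iff₀ hxy] at hs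
    nlinarith

/-- Lemma 1 (T = 3): if a feasible `π*` (satisfying the orbit-sum restrictions (c1)
and the marginal moment restrictions (c2)) has the form
`F(π*(i,j,k)/π^S(i,j,k)) = β₁ u_i + β₂ u_j + β₃ u_k + ψ_{abc}` for `F = f′` and a
permutation-invariant `ψ`, then `π*` minimizes the `f`-divergence `I(π : π^S)`
over the feasible set. -/
theorem fdivergence_min_T3
    (r : ℕ) (hr : 2 ≤ r)
    (u : Fin r → ℝ) (humono : Monotone u)
    (hune : u ⟨0, by omega⟩ < u ⟨r - 1, by omega⟩)
    (f : ℝ → ℝ) (hconv : StrictConvexOn ℝ (Set.Ioi 0) f)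
    (hdiff : ∀ x ∈ Set.Ioi (0 : ℝ), DifferentiableAt ℝ f x) (hf1 : f 1 = 0)
    (F : ℝ → ℝ) (hF : F = deriv f)
    (piS : Fin r × Fin r × Fin r → ℝ)
    (hpiSpos : ∀ c, 0 < piS c) (hpiSsum : ∑ c, piS c = 1)
    (hpiSinv : ∀ c, ∀ p ∈ A3 c, piS p = piS c)
    (μ₁ μ₂ μ₃ : ℝ)
    (πstar : Fin r × Fin r × Fin r → ℝ)
    -- π* belongs to the feasible set:
    (hstarpos : ∀ c, 0 < πstar c) (hstarsum : ∑ c, πstar c = 1)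
    (hstarc1 : ∀ c, ∑ p ∈ A3 c, πstar p = ∑ p ∈ A3 c, piS p)
    (hstarc2₁ : ∑ i, u i * (∑ j, ∑ k, πstar (i, j, k)) = μ₁)
    (hstarc2₂ : ∑ j, u j * (∑ i, ∑ k, πstar (i, j, k)) = μ₂)
    (hstarc2₃ : ∑ k, u k * (∑ i, ∑ j, πstar (i, j, k)) = μ₃)
    -- π* has the stated form:
    (β₁ β₂ β₃ : ℝ) (ψ : Fin r × Fin r × Fin r → ℝ)
    (hψ : ∀ c, ∀ p ∈ A3 c, ψ p = ψ c)
    (hform : ∀ i j k, F (πstar (i, j, k) / piS (i, j, k)) =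
      β₁ * u i + β₂ * u j + β₃ * u k + ψ (i, j, k)) :
    -- then π* minimizes I(π : π^S) over the feasible set
    ∀ π : Fin r × Fin r × Fin r → ℝ,
      (∀ c, 0 < π c) → (∑ c, π c = 1) →
      (∀ c, ∑ p ∈ A3 c, π p = ∑ p ∈ A3 c, piS p) →
      (∑ i, u i * (∑ j, ∑ k, π (i, j, k)) = μ₁) →
      (∑ j, u j * (∑ i, ∑ k, π (i, j, k)) = μ₂) →
      (∑ k, u k * (∑ i, ∑ j, π (i, j, k)) = μ₃) →
      (∑ c, piS c * f (πstar c / piS c)) ≤ ∑ c, piS c * f (π c / piS c) := by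
  intro π hpos hsum hc1 hc21 hc22 hc23
  set g : Fin r × Fin r × Fin r → ℝ := fun c => π c - πstar c with hgdef
  have hformc : ∀ c : Fin r × Fin r × Fin r,
      F (πstar c / piS c) = β₁ * u c.1 + β₂ * u c.2.1 + β₃ * u c.2.2 + ψ c := by
    rintro ⟨i, j, k⟩; exact hform i j k
  have hgorb : ∀ c, ∑ p ∈ A3 c, g p = 0 := by
    intro c
    simp only [hgdef, Finset.sum_sub_distrib, hc1 c, hstarc1 c, sub_self]
  -- the three moment terms vanish
  have swap3 : ∀ h : Fin r → Fin r → Fin r → ℝ,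
      (∑ i, ∑ j, ∑ k, h i j k) = ∑ k, ∑ i, ∑ j, h i j k := by
    intro h
    rw [show (∑ i, ∑ j, ∑ k, h i j k) = ∑ i, ∑ k, ∑ j, h i j k from
      Finset.sum_congr rfl fun i _ => Finset.sum_comm, Finset.sum_comm]
  have t1 : ∑ c : Fin r × Fin r × Fin r, u c.1 * g c = 0 := by
    have e : ∑ c : Fin r × Fin r × Fin r, u c.1 * g c
        = (∑ i, u i * (∑ j, ∑ k, π (i, j, k)))
          - ∑ i, u i * (∑ j, ∑ k, πstar (i, j, k)) := by
      simp only [hgdef, Fintype.sum_prod_type, mul_sub, Finset.sum_sub_distrib,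
        Finset.mul_sum]
    rw [e, hc21, hstarc2₁, sub_self]
  have t2 : ∑ c : Fin r × Fin r × Fin r, u c.2.1 * g c = 0 := by
    have e : ∑ c : Fin r × Fin r × Fin r, u c.2.1 * g c
        = (∑ j, u j * (∑ i, ∑ k, π (i, j, k)))
          - ∑ j, u j * (∑ i, ∑ k, πstar (i, j, k)) := by
      simp only [hgdef, Fintype.sum_prod_type, mul_sub, Finset.sum_sub_distrib,
        Finset.mul_sum]
      congr 1 <;> exact Finset.sum_comm
    rw [e, hc22, hstarc2₂, sub_self]
  have t3 : ∑ c : Fin r × Fin r × Fin r, u c.2.2 * g c = 0 := by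
    have e : ∑ c : Fin r × Fin r × Fin r, u c.2.2 * g c
        = (∑ k, u k * (∑ i, ∑ j, π (i, j, k)))
          - ∑ k, u k * (∑ i, ∑ j, πstar (i, j, k)) := by
      simp only [hgdef, Fintype.sum_prod_type, mul_sub, Finset.sum_sub_distrib,
        Finset.mul_sum]
      congr 1 <;> exact swap3 _
    rw [e, hc23, hstarc2₃, sub_self]
  have t4 : ∑ c : Fin r × Fin r × Fin r, ψ c * g c = 0 := sum_psi_zero ψ g hψ hgorb
  have hZ : ∑ c : Fin r × Fin r × Fin r, F (πstar c / piS c) * g c = 0 := by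
    have expand : ∀ c : Fin r × Fin r × Fin r,
        F (πstar c / piS c) * g c
          = β₁ * (u c.1 * g c) + β₂ * (u c.2.1 * g c) + β₃ * (u c.2.2 * g c)
            + ψ c * g c := by
      intro c; rw [hformc c]; ring
    simp_rw [expand]
    rw [Finset.sum_add_distrib, Finset.sum_add_distrib, Finset.sum_add_distrib,
      ← Finset.mul_sum, ← Finset.mul_sum, ← Finset.mul_sum, t1, t2, t3, t4]
    ring
  -- per-cell gradient inequality
  have cell : ∀ c : Fin r × Fin r × Fin r,
      piS c * f (πstar c / piS c) + F (πstar c / piS c) * g c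
        ≤ piS c * f (π c / piS c) := by
    intro c
    have hpS := hpiSpos c
    have hx : 0 < πstar c / piS c := div_pos (hstarpos c) hpS
    have hy : 0 < π c / piS c := div_pos (hpos c) hpS
    have hgr := grad_ineq hconv hdiff hx hy
    have hmul := mul_le_mul_of_nonneg_left hgr hpS.le
    rw [mul_add] at hmul
    have key : piS c * (deriv f (πstar c / piS c) * (π c / piS c - πstar c / piS c))
        = deriv f (πstar c / piS c) * g c := by
      have h1 : piS c * (π c / piS c - πstar c / piS c) = g c := by
        field_simp
        rfl
      rw [← h1]; ring
    rw [key] at hmul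
    rw [hF]
    linarith
  calc ∑ c, piS c * f (πstar c / piS c)
      = ∑ c, (piS c * f (πstar c / piS c) + F (πstar c / piS c) * g c) := by
        rw [Finset.sum_add_distrib, hZ, add_zero]
    _ ≤ ∑ c, piS c * f (π c / piS c) := Finset.sum_le_sum fun c _ => cell c
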